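/- Let n ≥ 1 and let q_i(λ), i = 1,…,n, be the Viète polynomials on ℝ^n. Then for all λ ∈ ℝ^n and all indices j, r ∈ {1,…,n} one has ∑_{i=1}^n (∂q_i/∂λ_j)(λ) · λ_r^{n−i} = −∏_{s≠j} (λ_r − λ_s). In particular, if the entries of λ are pairwise distinct, then ∑_{i=1}^n (∂q_i/∂λ_j)(λ) · λ_r^{n−i} = −δ_{jr} Δ_r(λ). -/

import Mathlib

noncomputable section

/-- Viète polynomial `q_i(λ) = (-1)^i e_i(λ)`; by convention `q_0 = 1` and `q_i = 0` for `i > n`. -/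
def viete {n : ℕ} (i : ℕ) (lam : Fin n → ℝ) : ℝ :=
  (-1 : ℝ) ^ i * ∑ s ∈ Finset.powersetCard i (Finset.univ : Finset (Fin n)), ∏ j ∈ s, lam j

/-- The partial derivative `∂q_i/∂λ_j` of the `i`-th Viète polynomial. -/
def vieteD {n : ℕ} (i : ℕ) (lam : Fin n → ℝ) (j : Fin n) : ℝ :=
  fderiv ℝ (viete i) lam (Pi.single j 1)

/-- `Δ_j(λ) = ∏_{s ≠ j} (λ_j - λ_s)`. -/
def Delta {n : ℕ} (lam : Fin n → ℝ) (j : Fin n) : ℝ :=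
  ∏ s ∈ Finset.univ.erase j, (lam j - lam s)

lemma hasFDerivAt_viete {n : ℕ} (i : ℕ) (lam : Fin n → ℝ) :
    HasFDerivAt (viete i)
      ((-1 : ℝ) ^ i • ∑ u ∈ Finset.powersetCard i (Finset.univ : Finset (Fin n)),
        ∑ m ∈ u, (∏ k ∈ u.erase m, lam k) •
          (ContinuousLinearMap.proj m : (Fin n → ℝ) →L[ℝ] ℝ)) lam := by
  have h1 : ∀ u ∈ Finset.powersetCard i (Finset.univ : Finset (Fin n)),
      HasFDerivAt (fun x : Fin n → ℝ => ∏ m ∈ u, x m)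
        (∑ m ∈ u, (∏ k ∈ u.erase m, lam k) •
          (ContinuousLinearMap.proj m : (Fin n → ℝ) →L[ℝ] ℝ)) lam := by
    intro u _
    exact hasFDerivAt_finset_prod
  have h2 := HasFDerivAt.fun_sum h1
  exact h2.const_smul ((-1 : ℝ) ^ i)

lemma vieteD_eq {n : ℕ} (i : ℕ) (lam : Fin n → ℝ) (j : Fin n) :
    vieteD i lam j = (-1 : ℝ) ^ i *
      ∑ u ∈ Finset.powersetCard i (Finset.univ : Finset (Fin n)),
        (if j ∈ u then ∏ m ∈ u.erase j, lam m else 0) := by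
  have h := (hasFDerivAt_viete i lam).fderiv
  rw [vieteD, h]
  simp only [ContinuousLinearMap.smul_apply, ContinuousLinearMap.sum_apply,
    ContinuousLinearMap.proj_apply, smul_eq_mul]
  congr 1
  refine Finset.sum_congr rfl fun u _ => ?_
  have : ∀ m ∈ u, (∏ k ∈ u.erase m, lam k) * (Pi.single j 1 : Fin n → ℝ) m
      = if m = j then ∏ k ∈ u.erase j, lam k else 0 := by
    intro m _
    rcases eq_or_ne m j with h | h
    · subst h; simp
    · simp [Pi.single_apply, h]
  rw [Finset.sum_congr rfl this, Finset.sum_ite_eq' u j (fun _ => ∏ k ∈ u.erase j, lam k)]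

lemma vieteD_eq' {n : ℕ} (k : ℕ) (lam : Fin n → ℝ) (j : Fin n) :
    vieteD (k + 1) lam j = (-1 : ℝ) ^ (k + 1) *
      ∑ v ∈ Finset.powersetCard k ((Finset.univ : Finset (Fin n)).erase j),
        ∏ m ∈ v, lam m := by
  rw [vieteD_eq]
  congr 1
  rw [← Finset.sum_filter]
  refine Finset.sum_nbij' (fun u => u.erase j) (fun v => insert j v) ?_ ?_ ?_ ?_ ?_
  · intro u hu
    simp only [Finset.mem_filter, Finset.mem_powersetCard] at hu ⊢
    constructor
    · intro x hx
      simp only [Finset.mem_erase] at hx ⊢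
      exact ⟨hx.1, Finset.mem_univ x⟩
    · rw [Finset.card_erase_of_mem hu.2, hu.1.2]
      omega
  · intro v hv
    simp only [Finset.mem_powersetCard] at hv
    have hjv : j ∉ v := fun h => by
      have := hv.1 h
      simp at this
    simp only [Finset.mem_filter, Finset.mem_powersetCard]
    refine ⟨⟨Finset.subset_univ _, ?_⟩, Finset.mem_insert_self j v⟩
    rw [Finset.card_insert_of_notMem hjv, hv.2]
  · intro u hu
    simp only [Finset.mem_filter] at hu
    exact Finset.insert_erase hu.2
  · intro v hv
    simp only [Finset.mem_powersetCard] at hv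
    have hjv : j ∉ v := fun h => by
      have := hv.1 h
      simp at this
    exact Finset.erase_insert hjv
  · intro u _; rfl

lemma prod_sub_eq {n : ℕ} (t : Finset (Fin n)) (f : Fin n → ℝ) (x : ℝ) :
    ∏ s ∈ t, (x - f s) = ∑ k ∈ Finset.range (t.card + 1),
      (-1 : ℝ) ^ k * (∑ u ∈ t.powersetCard k, ∏ m ∈ u, f m) * x ^ (t.card - k) := by
  have h := congrArg (Polynomial.eval x) (Multiset.prod_X_sub_X_eq_sum_esymm (t.val.map f))
  simp only [Polynomial.eval_multiset_prod, Multiset.map_map, Function.comp,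
    Polynomial.eval_sub, Polynomial.eval_X, Polynomial.eval_C, Polynomial.eval_finset_sum,
    Polynomial.eval_mul, Polynomial.eval_pow, Polynomial.eval_one, Polynomial.eval_neg,
    Multiset.card_map] at h
  have hl : ((t.val.map fun s => x - f s)).prod = ∏ s ∈ t, (x - f s) := by
    rw [Finset.prod_eq_multiset_prod]
  rw [hl] at h
  rw [h]
  refine Finset.sum_congr (by rw [Finset.card_def]) fun k hk => ?_
  rw [Finset.esymm_map_val, Finset.card_def]
  ring

theorem viete_derivative_sum (n : ℕ) (hn : 1 ≤ n) (lam : Fin n → ℝ) (j r : Fin n) :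
    (∑ i ∈ Finset.Icc 1 n, vieteD i lam j * lam r ^ (n - i)) =
      -(∏ s ∈ Finset.univ.erase j, (lam r - lam s)) ∧
    (Function.Injective lam →
      (∑ i ∈ Finset.Icc 1 n, vieteD i lam j * lam r ^ (n - i)) =
        -((if j = r then (1 : ℝ) else 0) * Delta lam r)) := by
  have hcard : ((Finset.univ : Finset (Fin n)).erase j).card = n - 1 := by
    rw [Finset.card_erase_of_mem (Finset.mem_univ j), Finset.card_univ, Fintype.card_fin]
  have main : (∑ i ∈ Finset.Icc 1 n, vieteD i lam j * lam r ^ (n - i)) =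
      -(∏ s ∈ Finset.univ.erase j, (lam r - lam s)) := by
    rw [show Finset.Icc 1 n = Finset.Ico 1 (n + 1) by rfl, Finset.sum_Ico_eq_sum_range]
    simp only [Nat.add_sub_cancel]
    rw [prod_sub_eq (Finset.univ.erase j) lam (lam r), hcard]
    rw [show n - 1 + 1 = n from Nat.succ_pred_eq_of_pos hn]
    rw [← Finset.sum_neg_distrib]
    refine Finset.sum_congr rfl fun k hk => ?_
    rw [show 1 + k = k + 1 from Nat.add_comm 1 k, vieteD_eq']
    have : n - (k + 1) = n - 1 - k := by omega
    rw [this, pow_succ]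
    ring
  refine ⟨main, fun _ => ?_⟩
  rcases eq_or_ne j r with h | h
  · subst h
    rw [main, if_pos rfl, one_mul, Delta]
  · have h0 : (∏ s ∈ Finset.univ.erase j, (lam r - lam s)) = 0 :=
      Finset.prod_eq_zero (Finset.mem_erase.mpr ⟨Ne.symm h, Finset.mem_univ r⟩)
        (sub_self (lam r))
    rw [main, h0, if_neg h, zero_mul, neg_zero]
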